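/- Fix α > 2 and ρ ∈ (0,1). The function F(s) = ρ·s + √((1−ρ²)·g_α(s)) is concave on [0,1] and attains its maximum over [0,1] at a unique point s* ∈ (0,1]. -/

import Mathlib

/-- `c_α = 1/tan(π/α)`. -/
noncomputable def cAlpha (α : ℝ) : ℝ := 1 / Real.tan (Real.pi / α)

/-- `r_α(s) = √(c_α² + 1 − s²) − c_α`. -/
noncomputable def rAlpha (α s : ℝ) : ℝ :=
  Real.sqrt (cAlpha α ^ 2 + 1 - s ^ 2) - cAlpha α

/-- `g_α(s) = −1 − s² + (2α/π)·r_α(s) + (2αs/π)·arctan(s/(r_α(s) + c_α))`. -/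
noncomputable def gAlpha (α s : ℝ) : ℝ :=
  -1 - s ^ 2 + 2 * α * rAlpha α s / Real.pi
    + 2 * α * s / Real.pi * Real.arctan (s / (rAlpha α s + cAlpha α))


open Real Set

noncomputable def auxG (k C c s : ℝ) : ℝ :=
  -1 - s^2 + C*(Real.sqrt (1 - (k*s)^2)/k - c) + C*s*Real.arcsin (k*s)
noncomputable def auxG1 (k C s : ℝ) : ℝ := -2*s + C*Real.arcsin (k*s)
noncomputable def auxG2 (k C s : ℝ) : ℝ := -2 + C*k/Real.sqrt (1 - (k*s)^2)
noncomputable def auxG3 (k C s : ℝ) : ℝ :=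
  C*k^3*s/(Real.sqrt (1 - (k*s)^2)*(1 - (k*s)^2))
noncomputable def auxP (k C c s : ℝ) : ℝ := auxG1 k C s^2/2 - auxG k C c s * auxG2 k C s

lemma aux_sqrt_hasDerivAt {k s : ℝ} (h : (k*s)^2 < 1) :
    HasDerivAt (fun t => Real.sqrt (1-(k*t)^2)) (-(k^2*s)/Real.sqrt (1-(k*s)^2)) s := by
  have h0 : (0:ℝ) < 1 - (k*s)^2 := by linarith
  have hs0 : 0 < Real.sqrt (1-(k*s)^2) := Real.sqrt_pos.2 h0
  have h1 : HasDerivAt (fun t : ℝ => (k*t)^2) (2*(k*s)*k) s := by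
    have := ((hasDerivAt_id s).const_mul k).pow 2
    refine this.congr_deriv ?_
    simp
  have hu : HasDerivAt (fun t : ℝ => 1-(k*t)^2) (-(2*k^2*s)) s := by
    have := h1.const_sub 1
    refine this.congr_deriv ?_
    ring
  have := (Real.hasDerivAt_sqrt h0.ne').comp s hu
  refine this.congr_deriv ?_
  field_simp

lemma aux_arcsin_hasDerivAt {k s : ℝ} (h : (k*s)^2 < 1) :
    HasDerivAt (fun t => Real.arcsin (k*t)) (k/Real.sqrt (1-(k*s)^2)) s := by
  have h1 : -1 < k*s := by nlinarith
  have h2 : k*s < 1 := by nlinarith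
  have := (Real.hasDerivAt_arcsin (by linarith : k*s ≠ -1) (by linarith : k*s ≠ 1)).comp
    s ((hasDerivAt_id s).const_mul k)
  refine this.congr_deriv ?_
  field_simp

lemma auxG_hasDerivAt {k C c s : ℝ} (hk : 0 < k) (h : (k*s)^2 < 1) :
    HasDerivAt (auxG k C c) (auxG1 k C s) s := by
  have h0 : (0:ℝ) < 1 - (k*s)^2 := by linarith
  have hs0 : 0 < Real.sqrt (1-(k*s)^2) := Real.sqrt_pos.2 h0
  have h1 : HasDerivAt (fun t : ℝ => -1 - t^2) (-(2*s)) s := by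
    have := ((hasDerivAt_id s).pow 2).const_sub (-1 : ℝ)
    simpa using this
  have h2 : HasDerivAt (fun t => C*(Real.sqrt (1-(k*t)^2)/k - c))
      (C*((-(k^2*s)/Real.sqrt (1-(k*s)^2))/k)) s :=
    (((aux_sqrt_hasDerivAt h).div_const k).sub_const c).const_mul C
  have hCt : HasDerivAt (fun t : ℝ => C*t) C s := by
    simpa using (hasDerivAt_id s).const_mul C
  have h3 : HasDerivAt (fun t => C*t*Real.arcsin (k*t))
      (C*Real.arcsin (k*s) + (C*s)*(k/Real.sqrt (1-(k*s)^2))) s :=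
    hCt.mul (aux_arcsin_hasDerivAt h)
  have := (h1.add h2).add h3
  refine this.congr_deriv ?_
  unfold auxG1
  field_simp
  ring

lemma auxG1_hasDerivAt {k C s : ℝ} (h : (k*s)^2 < 1) :
    HasDerivAt (auxG1 k C) (auxG2 k C s) s := by
  have h1 : HasDerivAt (fun t : ℝ => -2*t) (-2 : ℝ) s := by
    simpa using (hasDerivAt_id s).const_mul (-2 : ℝ)
  have := h1.add ((aux_arcsin_hasDerivAt h).const_mul C)
  refine this.congr_deriv ?_
  unfold auxG2
  ring

lemma auxG2_hasDerivAt {k C s : ℝ} (h : (k*s)^2 < 1) :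
    HasDerivAt (auxG2 k C) (auxG3 k C s) s := by
  have h0 : (0:ℝ) < 1 - (k*s)^2 := by linarith
  have hs0 : 0 < Real.sqrt (1-(k*s)^2) := Real.sqrt_pos.2 h0
  have hsq : Real.sqrt (1-(k*s)^2)^2 = 1-(k*s)^2 := Real.sq_sqrt h0.le
  have hinv : HasDerivAt (fun t => (Real.sqrt (1-(k*t)^2))⁻¹)
      (-(-(k^2*s)/Real.sqrt (1-(k*s)^2))/(Real.sqrt (1-(k*s)^2))^2) s :=
    (aux_sqrt_hasDerivAt h).inv hs0.ne'
  have := (hinv.const_mul (C*k)).const_add (-2 : ℝ)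
  refine this.congr_deriv ?_
  unfold auxG3
  rw [hsq]
  field_simp

lemma auxP_hasDerivAt {k C c s : ℝ} (hk : 0 < k) (h : (k*s)^2 < 1) :
    HasDerivAt (auxP k C c) (-(auxG k C c s * auxG3 k C s)) s := by
  have h1 := ((auxG1_hasDerivAt (C := C) h).pow 2).div_const 2
  have h2 := (auxG_hasDerivAt (C := C) (c := c) hk h).mul (auxG2_hasDerivAt (C := C) h)
  have := h1.sub h2
  refine this.congr_deriv ?_
  ring

lemma strictConcaveOn_congr_aux {f g : ℝ → ℝ} {D : Set ℝ}
    (hg : StrictConcaveOn ℝ D g) (he : Set.EqOn f g D) : StrictConcaveOn ℝ D f := by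
  refine ⟨hg.1, fun x hx y hy hxy a b ha hb hab => ?_⟩
  rw [he hx, he hy, he (hg.1 hx hy ha.le hb.le hab)]
  exact hg.2 hx hy hxy ha hb hab

lemma isMaxOn_congr_aux {f g : ℝ → ℝ} {D : Set ℝ} (he : Set.EqOn f g D) {a : ℝ}
    (ha : a ∈ D) : IsMaxOn f D a ↔ IsMaxOn g D a := by
  simp only [isMaxOn_iff]
  exact ⟨fun h x hx => by rw [← he hx, ← he ha]; exact h x hx,
    fun h x hx => by rw [he hx, he ha]; exact h x hx⟩

lemma algebra_aux (A G G1 G2 P y : ℝ) (hy : y ≠ 0) (hysq : y^2 = A*G)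
    (hP : P = G1^2/2 - G*G2) :
    -(A^2*P)/(2*y^3) = (A*G2*(2*y) - A*G1*(2*(1/(2*y)*(A*G1))))/(2*y)^2 := by
  subst hP
  field_simp
  linear_combination (-(2:ℝ)*A*G2) * hysq

set_option maxHeartbeats 1000000 in
theorem aux_main (k C c ρ : ℝ) (hk0 : 0 < k) (hk1 : k < 1) (hC0 : 0 < C)
    (hCk : C * Real.arcsin k = 2) (hcc : Real.sqrt (1-k^2) = c*k)
    (hρ0 : 0 < ρ) (hρ1 : ρ < 1) :
    StrictConcaveOn ℝ (Set.Icc 0 1)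
        (fun s : ℝ => ρ * s + Real.sqrt ((1 - ρ ^ 2) * auxG k C c s)) ∧
    ∃ sstar ∈ Set.Ioc (0 : ℝ) 1,
      IsMaxOn (fun s : ℝ => ρ * s + Real.sqrt ((1 - ρ ^ 2) * auxG k C c s))
        (Set.Icc 0 1) sstar ∧
      ∀ s ∈ Set.Icc (0 : ℝ) 1,
        IsMaxOn (fun s : ℝ => ρ * s + Real.sqrt ((1 - ρ ^ 2) * auxG k C c s))
          (Set.Icc 0 1) s → s = sstar := by
  have hks : ∀ s : ℝ, 0 ≤ s → s ≤ 1 → (k*s)^2 < 1 := by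
    intro s h1 h2
    have h3 : 0 ≤ k*s := mul_nonneg hk0.le h1
    have h4 : k*s ≤ k := by nlinarith
    nlinarith
  -- continuity
  have hGcont : Continuous (auxG k C c) := by unfold auxG; continuity
  have hG1cont : Continuous (auxG1 k C) := by unfold auxG1; continuity
  have hG2cont : ContinuousOn (auxG2 k C) (Icc 0 1) := by
    unfold auxG2
    refine ContinuousOn.add continuousOn_const (ContinuousOn.div continuousOn_const
      (Continuous.continuousOn (by continuity)) ?_)
    intro x hx
    exact (Real.sqrt_pos.2 (by linarith [hks x hx.1 hx.2])).ne'
  have hPcont : ContinuousOn (auxP k C c) (Icc 0 1) := by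
    unfold auxP
    exact (((hG1cont.continuousOn).pow 2).div_const 2).sub
      (hGcont.continuousOn.mul hG2cont)
  -- values
  have hG1_0 : auxG1 k C 0 = 0 := by simp [auxG1]
  have hG1_1 : auxG1 k C 1 = 0 := by
    unfold auxG1; simp only [mul_one]; linear_combination hCk
  have hG_1 : auxG k C c 1 = 0 := by
    have hck' : c*k/k = c := by field_simp
    unfold auxG
    simp only [mul_one, one_pow]
    rw [hcc, hck']
    linear_combination hCk
  have hP_1 : auxP k C c 1 = 0 := by
    unfold auxP; rw [hG1_1, hG_1]; ring
  -- positivity of G3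
  have hG3pos : ∀ x ∈ Ioo (0:ℝ) 1, 0 < auxG3 k C x := by
    intro x hx
    have h0 : (0:ℝ) < 1-(k*x)^2 := by linarith [hks x hx.1.le hx.2.le]
    unfold auxG3
    exact div_pos (mul_pos (mul_pos hC0 (pow_pos hk0 3)) hx.1) (mul_pos (Real.sqrt_pos.2 h0) h0)
  have hevent_ks : ∀ x : ℝ, (k*x)^2 < 1 → ∀ᶠ y in nhds x, (k*y)^2 < 1 := by
    intro x hx
    exact (isOpen_lt (by continuity) continuous_const).mem_nhds hx
  -- G1 strictly convex, hence negative on (0,1)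
  have hderiv2G1 : ∀ x ∈ Ioo (0:ℝ) 1, deriv^[2] (auxG1 k C) x = auxG3 k C x := by
    intro x hx
    have hkx := hks x hx.1.le hx.2.le
    have h1 : deriv (auxG1 k C) =ᶠ[nhds x] auxG2 k C := by
      filter_upwards [hevent_ks x hkx] with y hy
      exact (auxG1_hasDerivAt hy).deriv
    show deriv (deriv (auxG1 k C)) x = _
    rw [h1.deriv_eq]
    exact (auxG2_hasDerivAt hkx).deriv
  have hG1convex : StrictConvexOn ℝ (Icc (0:ℝ) 1) (auxG1 k C) := by
    refine strictConvexOn_of_deriv2_pos (convex_Icc 0 1) hG1cont.continuousOn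
      (fun x hx => ?_)
    rw [interior_Icc] at hx
    rw [hderiv2G1 x hx]
    exact hG3pos x hx
  have hG1neg : ∀ s ∈ Ioo (0:ℝ) 1, auxG1 k C s < 0 := by
    intro s hs
    have h2 := hG1convex.2 (Set.left_mem_Icc.2 zero_le_one)
      (Set.right_mem_Icc.2 zero_le_one) zero_ne_one
      (show (0:ℝ) < 1-s by linarith [hs.2]) hs.1 (by ring)
    simpa [hG1_0, hG1_1, smul_eq_mul] using h2
  -- G strictly decreasing, hence positive on [0,1)
  have hGanti : StrictAntiOn (auxG k C c) (Icc (0:ℝ) 1) := by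
    refine strictAntiOn_of_deriv_neg (convex_Icc 0 1) hGcont.continuousOn
      (fun x hx => ?_)
    rw [interior_Icc] at hx
    rw [(auxG_hasDerivAt hk0 (hks x hx.1.le hx.2.le)).deriv]
    exact hG1neg x hx
  have hGpos : ∀ s ∈ Ico (0:ℝ) 1, 0 < auxG k C c s := by
    intro s hs
    have := hGanti ⟨hs.1, hs.2.le⟩ (Set.right_mem_Icc.2 zero_le_one) hs.2
    rw [hG_1] at this
    exact this
  -- P strictly decreasing, hence positive on [0,1)
  have hPanti : StrictAntiOn (auxP k C c) (Icc (0:ℝ) 1) := by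
    refine strictAntiOn_of_deriv_neg (convex_Icc 0 1) hPcont (fun x hx => ?_)
    rw [interior_Icc] at hx
    rw [(auxP_hasDerivAt hk0 (hks x hx.1.le hx.2.le)).deriv]
    have := mul_pos (hGpos x ⟨hx.1.le, hx.2⟩) (hG3pos x hx)
    linarith
  have hPpos : ∀ s ∈ Ico (0:ℝ) 1, 0 < auxP k C c s := by
    intro s hs
    have := hPanti ⟨hs.1, hs.2.le⟩ (Set.right_mem_Icc.2 zero_le_one) hs.2
    rw [hP_1] at this
    exact this
  -- the objective
  have hb : 0 < 1 - ρ^2 := by nlinarith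
  have hFaltcont : Continuous
      (fun s : ℝ => ρ * s + Real.sqrt ((1 - ρ ^ 2) * auxG k C c s)) :=
    (continuous_const.mul continuous_id).add
      (Real.continuous_sqrt.comp (continuous_const.mul hGcont))
  have hFd : ∀ s, 0 < auxG k C c s → (k*s)^2 < 1 →
      HasDerivAt (fun s : ℝ => ρ * s + Real.sqrt ((1 - ρ ^ 2) * auxG k C c s))
        (ρ + (1-ρ^2)*auxG1 k C s/(2*Real.sqrt ((1-ρ^2)*auxG k C c s))) s := by
    intro s hGs hkss
    have hbG : 0 < (1-ρ^2)*auxG k C c s := mul_pos hb hGs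
    have hsy : 0 < Real.sqrt ((1-ρ^2)*auxG k C c s) := Real.sqrt_pos.2 hbG
    have h1 : HasDerivAt (fun t => (1-ρ^2)*auxG k C c t) ((1-ρ^2)*auxG1 k C s) s :=
      (auxG_hasDerivAt hk0 hkss).const_mul _
    have h2 : HasDerivAt (fun t => Real.sqrt ((1-ρ^2)*auxG k C c t))
        (1/(2*Real.sqrt ((1-ρ^2)*auxG k C c s))*((1-ρ^2)*auxG1 k C s)) s :=
      (Real.hasDerivAt_sqrt hbG.ne').comp s h1
    have h3 : HasDerivAt (fun t : ℝ => ρ*t) ρ s := by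
      simpa using (hasDerivAt_id s).const_mul ρ
    have h4 := h3.add h2
    refine h4.congr_deriv ?_
    field_simp
  have hF1d : ∀ s ∈ Ioo (0:ℝ) 1, HasDerivAt
      (fun t => ρ + (1-ρ^2)*auxG1 k C t/(2*Real.sqrt ((1-ρ^2)*auxG k C c t)))
      (-((1-ρ^2)^2*auxP k C c s)/(2*Real.sqrt ((1-ρ^2)*auxG k C c s)^3)) s := by
    intro s hs
    have hkss := hks s hs.1.le hs.2.le
    have hGs := hGpos s ⟨hs.1.le, hs.2⟩
    have hbG : 0 < (1-ρ^2)*auxG k C c s := mul_pos hb hGs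
    have hy : 0 < Real.sqrt ((1-ρ^2)*auxG k C c s) := Real.sqrt_pos.2 hbG
    have hysq : Real.sqrt ((1-ρ^2)*auxG k C c s)^2 = (1-ρ^2)*auxG k C c s :=
      Real.sq_sqrt hbG.le
    have hnum : HasDerivAt (fun t => (1-ρ^2)*auxG1 k C t) ((1-ρ^2)*auxG2 k C s) s :=
      (auxG1_hasDerivAt hkss).const_mul _
    have hGd : HasDerivAt (fun t => (1-ρ^2)*auxG k C c t) ((1-ρ^2)*auxG1 k C s) s :=
      (auxG_hasDerivAt hk0 hkss).const_mul _
    have hsqrtd : HasDerivAt (fun t => Real.sqrt ((1-ρ^2)*auxG k C c t))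
        (1/(2*Real.sqrt ((1-ρ^2)*auxG k C c s))*((1-ρ^2)*auxG1 k C s)) s :=
      (Real.hasDerivAt_sqrt hbG.ne').comp s hGd
    have hden : HasDerivAt (fun t => 2*Real.sqrt ((1-ρ^2)*auxG k C c t))
        (2*(1/(2*Real.sqrt ((1-ρ^2)*auxG k C c s))*((1-ρ^2)*auxG1 k C s))) s :=
      hsqrtd.const_mul (2:ℝ)
    have hdiv := hnum.div hden (by positivity)
    have h5 := hdiv.const_add ρ
    refine h5.congr_deriv ?_
    exact (algebra_aux (1-ρ^2) (auxG k C c s) (auxG1 k C s) (auxG2 k C s)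
      (auxP k C c s) _ hy.ne' hysq rfl).symm
  -- second derivative negative on (0,1)
  have hd2 : ∀ x ∈ Ioo (0:ℝ) 1, deriv^[2]
      (fun s : ℝ => ρ * s + Real.sqrt ((1 - ρ ^ 2) * auxG k C c s)) x < 0 := by
    intro x hx
    have hGx := hGpos x ⟨hx.1.le, hx.2⟩
    have hbG : 0 < (1-ρ^2)*auxG k C c x := mul_pos hb hGx
    have hy : 0 < Real.sqrt ((1-ρ^2)*auxG k C c x) := Real.sqrt_pos.2 hbG
    have h1 : deriv (fun s : ℝ => ρ * s + Real.sqrt ((1 - ρ ^ 2) * auxG k C c s))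
        =ᶠ[nhds x]
        (fun t => ρ + (1-ρ^2)*auxG1 k C t/(2*Real.sqrt ((1-ρ^2)*auxG k C c t))) := by
      filter_upwards [isOpen_Ioo.mem_nhds hx] with y hy
      exact (hFd y (hGpos y ⟨hy.1.le, hy.2⟩) (hks y hy.1.le hy.2.le)).deriv
    have h2 : deriv (deriv (fun s : ℝ => ρ * s + Real.sqrt ((1 - ρ ^ 2) * auxG k C c s))) x
        = -((1-ρ^2)^2*auxP k C c x)/(2*Real.sqrt ((1-ρ^2)*auxG k C c x)^3) := by
      rw [h1.deriv_eq]
      exact (hF1d x hx).deriv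
    show deriv (deriv (fun s : ℝ => ρ * s + Real.sqrt ((1 - ρ ^ 2) * auxG k C c s))) x < 0
    rw [h2]
    apply div_neg_of_neg_of_pos
    · have h9 := mul_pos (pow_pos hb 2) (hPpos x ⟨hx.1.le, hx.2⟩)
      linarith
    · positivity
  have hconcAlt : StrictConcaveOn ℝ (Icc (0:ℝ) 1)
      (fun s : ℝ => ρ * s + Real.sqrt ((1 - ρ ^ 2) * auxG k C c s)) := by
    refine strictConcaveOn_of_deriv2_neg (convex_Icc 0 1) hFaltcont.continuousOn
      (fun x hx => ?_)
    rw [interior_Icc] at hx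
    exact hd2 x hx
  obtain ⟨sstar, hsmem, hmax⟩ := isCompact_Icc.exists_isMaxOn
    (Set.nonempty_Icc.2 zero_le_one) hFaltcont.continuousOn
  have hnot0 : ¬ IsMaxOn (fun s : ℝ => ρ * s + Real.sqrt ((1 - ρ ^ 2) * auxG k C c s))
      (Icc (0:ℝ) 1) 0 := by
    intro hmax0
    have hG0 : 0 < auxG k C c 0 := hGpos 0 ⟨le_refl 0, one_pos⟩
    have hd0 : HasDerivAt (fun s : ℝ => ρ * s + Real.sqrt ((1 - ρ ^ 2) * auxG k C c s))
        ρ 0 := by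
      have h := hFd 0 hG0 (by norm_num)
      rw [hG1_0] at h
      simpa using h
    have hW := hd0.hasDerivWithinAt (s := Icc 0 1)
    rw [hasDerivWithinAt_iff_tendsto_slope] at hW
    have hne : (nhdsWithin 0 (Icc (0:ℝ) 1 \ {0})).NeBot := by
      rw [Set.Icc_diff_left]
      apply mem_closure_iff_nhdsWithin_neBot.1
      rw [closure_Ioc (zero_ne_one' ℝ)]
      exact Set.left_mem_Icc.2 zero_le_one
    have hle : ρ ≤ 0 := by
      refine le_of_tendsto hW ?_
      filter_upwards [self_mem_nhdsWithin] with x hx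
      have hx0 : 0 < x := lt_of_le_of_ne hx.1.1 (Ne.symm hx.2)
      have hFx : (fun s : ℝ => ρ * s + Real.sqrt ((1 - ρ ^ 2) * auxG k C c s)) x
          ≤ (fun s : ℝ => ρ * s + Real.sqrt ((1 - ρ ^ 2) * auxG k C c s)) 0 :=
        hmax0 hx.1
      rw [slope_def_field]
      apply div_nonpos_of_nonpos_of_nonneg
      · simpa using sub_nonpos.2 hFx
      · linarith
    linarith
  have hsne : sstar ≠ 0 := fun h => hnot0 (h ▸ hmax)
  have hspos : 0 < sstar := lt_of_le_of_ne hsmem.1 (Ne.symm hsne)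
  refine ⟨hconcAlt, sstar, ⟨hspos, hsmem.2⟩, hmax, ?_⟩
  intro s hs hmaxs
  exact hconcAlt.eq_of_isMaxOn hmaxs hmax hs hsmem

set_option maxHeartbeats 1600000 in
/-- Fix `α > 2` and `ρ ∈ (0,1)`. The function
`F(s) = ρ·s + √((1−ρ²)·g_α(s))` is concave on `[0,1]` and attains its maximum
over `[0,1]` at a unique point `s* ∈ (0,1]`. -/
theorem phaseMax_scalar_objective_concave_unique_max (α ρ : ℝ) (hα : 2 < α)
    (hρ : ρ ∈ Set.Ioo (0 : ℝ) 1) :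
    ConcaveOn ℝ (Set.Icc 0 1)
        (fun s : ℝ => ρ * s + Real.sqrt ((1 - ρ ^ 2) * gAlpha α s)) ∧
    ∃ sstar ∈ Set.Ioc (0 : ℝ) 1,
      IsMaxOn (fun s : ℝ => ρ * s + Real.sqrt ((1 - ρ ^ 2) * gAlpha α s))
        (Set.Icc 0 1) sstar ∧
      ∀ s ∈ Set.Icc (0 : ℝ) 1,
        IsMaxOn (fun s : ℝ => ρ * s + Real.sqrt ((1 - ρ ^ 2) * gAlpha α s))
          (Set.Icc 0 1) s → s = sstar := by
  obtain ⟨hρ0, hρ1⟩ := hρ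
  have hπ := Real.pi_pos
  have hα0 : (0:ℝ) < α := by linarith
  obtain ⟨m, hm_def⟩ : ∃ m : ℝ, m = Real.pi/α := ⟨_, rfl⟩
  obtain ⟨k, hk_def⟩ : ∃ k : ℝ, k = Real.sin m := ⟨_, rfl⟩
  obtain ⟨c, hc_def⟩ : ∃ c : ℝ, c = Real.cos m / Real.sin m := ⟨_, rfl⟩
  obtain ⟨C, hC_def⟩ : ∃ C : ℝ, C = 2*α/Real.pi := ⟨_, rfl⟩
  have hm0 : 0 < m := by rw [hm_def]; positivity
  have hm2 : m < Real.pi/2 := by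
    rw [hm_def, div_lt_div_iff₀ hα0 two_pos]
    nlinarith [mul_pos hπ (show (0:ℝ) < α - 2 by linarith)]
  have hk0 : 0 < k := by
    rw [hk_def]; exact Real.sin_pos_of_pos_of_lt_pi hm0 (by linarith)
  have hcos0 : 0 < Real.cos m := Real.cos_pos_of_mem_Ioo ⟨by linarith, hm2⟩
  have hpyth : Real.sin m^2 + Real.cos m^2 = 1 := Real.sin_sq_add_cos_sq m
  have hksq1 : k^2 < 1 := by rw [hk_def]; nlinarith
  have hk1 : k < 1 := by nlinarith
  have hC0 : 0 < C := by rw [hC_def]; positivity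
  have hCm : C * m = 2 := by rw [hC_def, hm_def]; field_simp
  have harcsin_k : Real.arcsin k = m := by
    rw [hk_def]; exact Real.arcsin_sin (by linarith) (by linarith)
  have hCk : C * Real.arcsin k = 2 := by rw [harcsin_k]; exact hCm
  have hsin : Real.sin m ≠ 0 := by intro h; rw [h] at hk_def; linarith
  have hcc : Real.sqrt (1-k^2) = c*k := by
    rw [hk_def, hc_def, show 1 - Real.sin m^2 = Real.cos m^2 by linarith,
      Real.sqrt_sq hcos0.le, div_mul_cancel₀ _ hsin]
  have hcA : cAlpha α = c := by
    unfold cAlpha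
    rw [← hm_def, Real.tan_eq_sin_div_cos, one_div_div, hc_def]
  have hck : (c^2+1)*k^2 = 1 := by
    rw [hc_def, hk_def]
    field_simp [hsin]
    linarith
  have hks : ∀ s : ℝ, 0 ≤ s → s ≤ 1 → (k*s)^2 < 1 := by
    intro s h1 h2
    have h3 : 0 ≤ k*s := mul_nonneg hk0.le h1
    have h4 : k*s ≤ k := by nlinarith
    nlinarith
  have hEq : ∀ s ∈ Set.Icc (0:ℝ) 1, gAlpha α s = auxG k C c s := by
    intro s hs
    have hks' := hks s hs.1 hs.2
    have h0 : (0:ℝ) < 1 - (k*s)^2 := by linarith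
    have hsq0 : 0 < Real.sqrt (1-(k*s)^2) := Real.sqrt_pos.2 h0
    have hA : cAlpha α^2 + 1 - s^2 = (1-(k*s)^2)/k^2 := by
      rw [hcA, eq_div_iff (pow_ne_zero 2 hk0.ne')]
      linear_combination hck
    have hsqrtA : Real.sqrt (cAlpha α^2+1-s^2) = Real.sqrt (1-(k*s)^2)/k := by
      rw [hA, Real.sqrt_div h0.le, Real.sqrt_sq hk0.le]
    have hr : rAlpha α s = Real.sqrt (1-(k*s)^2)/k - c := by
      unfold rAlpha
      rw [hsqrtA, hcA]
    have harg : s/(rAlpha α s + cAlpha α) = k*s/Real.sqrt (1-(k*s)^2) := by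
      rw [hr, hcA, sub_add_cancel, div_div_eq_mul_div, mul_comm]
    have harcsin : Real.arcsin (k*s) = Real.arctan (s/(rAlpha α s + cAlpha α)) := by
      rw [harg]
      exact Real.arcsin_eq_arctan ⟨by nlinarith, by nlinarith⟩
    simp only [gAlpha, auxG]
    rw [← harcsin, hr, hC_def]
    ring
  have hEqF : Set.EqOn (fun s : ℝ => ρ * s + Real.sqrt ((1 - ρ ^ 2) * gAlpha α s))
      (fun s : ℝ => ρ * s + Real.sqrt ((1 - ρ ^ 2) * auxG k C c s))
      (Set.Icc 0 1) := by
    intro s hs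
    simp only
    rw [hEq s hs]
  obtain ⟨hconcAlt, sstar, hsIoc, hmax, huniq⟩ :=
    aux_main k C c ρ hk0 hk1 hC0 hCk hcc hρ0 hρ1
  have hsIcc : sstar ∈ Set.Icc (0:ℝ) 1 := ⟨hsIoc.1.le, hsIoc.2⟩
  exact ⟨(strictConcaveOn_congr_aux hconcAlt hEqF).concaveOn, sstar, hsIoc,
    (isMaxOn_congr_aux hEqF hsIcc).2 hmax,
    fun s hs h => huniq s hs ((isMaxOn_congr_aux hEqF hs).1 h)⟩
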